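/- Let X be a compact metric space, f : X → X continuous, x, y ∈ X, and N a positive integer. If limsup_{n→∞} (1/n)#{0 ≤ i < n : d(f^i x, f^i y) < t} > 0 for every t > 0, then limsup_{n→∞} (1/n)#{0 ≤ i < n : d((f^N)^i x, (f^N)^i y) < s} > 0 for every s > 0. -/

import Mathlib

open Filter Set
open scoped Classical

/-- Lower density of times `i < n` with `dist (f^[i] x) (f^[i] y) < t`. -/
noncomputable def ldens {X : Type*} [MetricSpace X] (f : X → X) (x y : X) (t : ℝ) : ℝ :=
  Filter.liminf (fun n : ℕ =>
    (((Finset.range n).filter (fun i => dist (f^[i] x) (f^[i] y) < t)).card : ℝ) / n)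
    Filter.atTop

/-- Upper density of times `i < n` with `dist (f^[i] x) (f^[i] y) < t`. -/
noncomputable def udens {X : Type*} [MetricSpace X] (f : X → X) (x y : X) (t : ℝ) : ℝ :=
  Filter.limsup (fun n : ℕ =>
    (((Finset.range n).filter (fun i => dist (f^[i] x) (f^[i] y) < t)).card : ℝ) / n)
    Filter.atTop

/-- Lower density along the sequence of times `q i`. -/
noncomputable def ldensSeq {X : Type*} [MetricSpace X] (f : X → X) (q : ℕ → ℕ)
    (x y : X) (t : ℝ) : ℝ :=
  Filter.liminf (fun n : ℕ =>
    (((Finset.range n).filter (fun i => dist (f^[q i] x) (f^[q i] y) < t)).card : ℝ) / n)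
    Filter.atTop

/-- Upper density along the sequence of times `q i`. -/
noncomputable def udensSeq {X : Type*} [MetricSpace X] (f : X → X) (q : ℕ → ℕ)
    (x y : X) (t : ℝ) : ℝ :=
  Filter.limsup (fun n : ℕ =>
    (((Finset.range n).filter (fun i => dist (f^[q i] x) (f^[q i] y) < t)).card : ℝ) / n)
    Filter.atTop

lemma aux_card {X : Type*} [MetricSpace X] (f : X → X) (x y : X) (s δ : ℝ) (N : ℕ) (hN : 0 < N)
    (hδ : ∀ a b : X, dist a b < δ → ∀ j ≤ N, dist (f^[j] a) (f^[j] b) < s) (n : ℕ) :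
    ((Finset.range n).filter (fun i => dist (f^[i] x) (f^[i] y) < δ)).card ≤
      N * ((Finset.range (n+1)).filter
        (fun k => dist ((f^[N])^[k] x) ((f^[N])^[k] y) < s)).card := by
  set A := (Finset.range n).filter (fun i => dist (f^[i] x) (f^[i] y) < δ) with hA
  set B := (Finset.range (n+1)).filter
      (fun k => dist ((f^[N])^[k] x) ((f^[N])^[k] y) < s) with hB
  have hmaps : ∀ i ∈ A, i / N + 1 ∈ B := by
    intro i hi
    rw [hA, Finset.mem_filter, Finset.mem_range] at hi
    obtain ⟨hin, hid⟩ := hi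
    rw [hB, Finset.mem_filter, Finset.mem_range]
    constructor
    · have : i / N ≤ i := Nat.div_le_self i N
      omega
    · set j := N - i % N with hj
      have hjN : j ≤ N := Nat.sub_le _ _
      have hmod : i % N < N := Nat.mod_lt _ hN
      have hdm : N * (i / N) + i % N = i := Nat.div_add_mod i N
      have hmul : N * (i / N + 1) = N * (i / N) + N := by ring
      have hkey : N * (i / N + 1) = j + i := by omega
      have := hδ (f^[i] x) (f^[i] y) hid j hjN
      rw [← Function.iterate_mul, hkey, Function.iterate_add_apply,
        Function.iterate_add_apply]
      exact this
  have hfib : ∀ k ∈ B, (A.filter (fun i => i / N + 1 = k)).card ≤ N := by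
    intro k _
    have hsub : A.filter (fun i => i / N + 1 = k) ⊆ Finset.Ico ((k-1)*N) ((k-1)*N + N) := by
      intro i hi
      rw [Finset.mem_filter] at hi
      obtain ⟨-, hk⟩ := hi
      replace hk : i / N + 1 = k := hk
      have hq : i / N = k - 1 := by rw [← hk, Nat.add_sub_cancel]
      rw [Finset.mem_Ico]
      constructor
      · rw [← hq]; exact Nat.div_mul_le_self i N
      · have h1 : i < (k - 1 + 1) * N := by
          rw [← Nat.div_lt_iff_lt_mul hN, hq]; omega
        have h2 : (k - 1 + 1) * N = (k-1)*N + N := by ring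
        omega
    calc (A.filter (fun i => i / N + 1 = k)).card
        ≤ (Finset.Ico ((k-1)*N) ((k-1)*N + N)).card := Finset.card_le_card hsub
      _ = N := by rw [Nat.card_Ico, Nat.add_sub_cancel_left]
  exact Finset.card_le_mul_card_image_of_maps_to hmaps N hfib

theorem stmt_5 {X : Type*} [MetricSpace X] [CompactSpace X]
    (f : X → X) (hf : Continuous f) (x y : X) (N : ℕ) (hN : 0 < N)
    (h : ∀ t : ℝ, 0 < t → 0 < udens f x y t) :
    ∀ s : ℝ, 0 < s → 0 < udens (f^[N]) x y s := by
  intro s hs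
  -- uniform continuity: choose δ
  have H : ∀ j : ℕ, ∃ δ > 0, ∀ a b : X, dist a b < δ → dist (f^[j] a) (f^[j] b) < s := by
    intro j
    have hc : Continuous (f^[j]) := hf.iterate j
    have hu : UniformContinuous (f^[j]) := CompactSpace.uniformContinuous_of_continuous hc
    exact Metric.uniformContinuous_iff.mp hu s hs
  choose D hD1 hD2 using H
  set δ : ℝ := (Finset.range (N+1)).inf' (show (Finset.range (N+1)).Nonempty from ⟨0, Finset.mem_range.mpr (by omega)⟩) D with hδdef
  have hδpos : 0 < δ := by
    rw [hδdef, Finset.lt_inf'_iff]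
    intro j _; exact hD1 j
  have hδ : ∀ a b : X, dist a b < δ → ∀ j ≤ N, dist (f^[j] a) (f^[j] b) < s := by
    intro a b hab j hj
    have hle : δ ≤ D j := Finset.inf'_le D (Finset.mem_range.mpr (by omega))
    exact hD2 j a b (lt_of_lt_of_le hab hle)
  -- sequences
  set a : ℕ → ℝ := fun n =>
    (((Finset.range n).filter (fun i => dist (f^[i] x) (f^[i] y) < δ)).card : ℝ) / n with ha
  set b : ℕ → ℝ := fun n =>
    (((Finset.range n).filter
      (fun k => dist ((f^[N])^[k] x) ((f^[N])^[k] y) < s)).card : ℝ) / n with hb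
  have hua : udens f x y δ = limsup a atTop := rfl
  have hub : udens (f^[N]) x y s = limsup b atTop := rfl
  have hanneg : ∀ n, 0 ≤ a n := fun n => div_nonneg (Nat.cast_nonneg _) (Nat.cast_nonneg _)
  have habnd : atTop.IsBoundedUnder (· ≥ ·) a := isBoundedUnder_of ⟨0, fun n => hanneg n⟩
  have hbub : atTop.IsBoundedUnder (· ≤ ·) b := by
    refine isBoundedUnder_of ⟨1, fun n => ?_⟩
    show b n ≤ 1
    rcases Nat.eq_zero_or_pos n with hn | hn
    · simp [hb, hn]
    · rw [hb]
      have hc : ((((Finset.range n).filter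
          (fun k => dist ((f^[N])^[k] x) ((f^[N])^[k] y) < s)).card : ℝ)) ≤ (n : ℝ) := by
        exact_mod_cast (Finset.card_filter_le _ _).trans (Finset.card_range n).le
      rw [div_le_one (by exact_mod_cast hn)]
      exact hc
  have hpos : 0 < udens f x y δ := h δ hδpos
  set ε : ℝ := udens f x y δ with hε
  have hεpos : (0:ℝ) < ε := hpos
  have hfreq : ∃ᶠ n in atTop, ε / 2 < a n := by
    apply frequently_lt_of_lt_limsup habnd.isCoboundedUnder_le
    rw [← hua]; linarith
  have hNpos : (0:ℝ) < N := by exact_mod_cast hN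
  have hfreq2 : ∃ᶠ m in atTop, ε / (4 * N) ≤ b m := by
    rw [frequently_atTop] at hfreq ⊢
    intro M
    obtain ⟨n, hnM, hn⟩ := hfreq M
    refine ⟨n + 1, by omega, ?_⟩
    have hn1 : 1 ≤ n := by
      by_contra hc
      have hn0 : n = 0 := by omega
      have : a n = 0 := by simp [ha, hn0]
      rw [this] at hn; linarith
    have hcard := aux_card f x y s δ N hN hδ n
    set cA : ℕ := ((Finset.range n).filter (fun i => dist (f^[i] x) (f^[i] y) < δ)).card
    set cB : ℕ := ((Finset.range (n+1)).filter
      (fun k => dist ((f^[N])^[k] x) ((f^[N])^[k] y) < s)).card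
    have hcardR : (cA : ℝ) ≤ (N : ℝ) * cB := by exact_mod_cast hcard
    have hnpos : (0:ℝ) < n := by exact_mod_cast hn1
    have hn1R : (1:ℝ) ≤ n := by exact_mod_cast hn1
    have han : a n = (cA : ℝ) / n := rfl
    have hεn : ε / 2 * n < (cA : ℝ) := by
      rw [han, lt_div_iff₀ hnpos] at hn; linarith
    show ε / (4 * N) ≤ b (n+1)
    have hbn : b (n+1) = (cB : ℝ) / ((n:ℝ)+1) := by
      rw [hb]; push_cast; rfl
    rw [hbn, div_le_div_iff₀ (by positivity) (by positivity)]
    nlinarith [hcardR, hεn, hn1R, hNpos, hεpos]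
  have hle : ε / (4 * N) ≤ udens (f^[N]) x y s := by
    rw [hub]
    exact le_limsup_of_frequently_le hfreq2 hbub
  have : (0:ℝ) < ε / (4 * N) := by positivity
  linarith
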